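/- For m ≥ 1, one has m_*(p_*(m)) = m, where m_*(p) := (1 + p + 2p²)/(2(√(p - p²) + 2p²)) for p ∈ (0, 1/2] and p_*(m) := (2m+1 - √(4(m-1)(m+2)+1))/(4(2m-1)). -/

import Mathlib

open Real

noncomputable def mStar (p : ℝ) : ℝ :=
  (1 + p + 2 * p ^ 2) / (2 * (Real.sqrt (p - p ^ 2) + 2 * p ^ 2))

noncomputable def pStar (m : ℝ) : ℝ :=
  (2 * m + 1 - Real.sqrt (4 * (m - 1) * (m + 2) + 1)) / (4 * (2 * m - 1))

/-- For `m ≥ 1`, `m_*(p_*(m)) = m`. -/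
theorem mStar_pStar (m : ℝ) (hm : 1 ≤ m) : mStar (pStar m) = m := by
  have ht : (0:ℝ) < 2*m - 1 := by linarith
  have hD : (0:ℝ) ≤ 4 * (m - 1) * (m + 2) + 1 := by nlinarith
  set s := Real.sqrt (4 * (m - 1) * (m + 2) + 1) with hs
  have hs0 : 0 ≤ s := Real.sqrt_nonneg _
  have hs2 : s ^ 2 = 4 * (m - 1) * (m + 2) + 1 := Real.sq_sqrt hD
  set p := pStar m with hp
  have hps : s = 2*m + 1 - 4*(2*m-1)*p := by
    rw [hp, pStar, ← hs]
    field_simp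
    ring
  have hq : 2*(2*m-1)^2*p^2 - (4*m^2-1)*p + 1 = 0 := by
    rw [hps] at hs2
    linear_combination (1/8 : ℝ) * hs2
  have hslt : s < 2*m + 1 := by nlinarith [hs2, hs0]
  have hp0 : 0 < p := by
    rw [hp, pStar, ← hs]
    apply div_pos <;> linarith
  have hple : (2*m-1)*p ≤ 1 := by nlinarith [hs2, hs0, hps]
  have hq0 : 0 ≤ (1 - (2*m-1)*p)/(2*m-1) := div_nonneg (by linarith) ht.le
  have hval : p - p^2 = ((1 - (2*m-1)*p)/(2*m-1))^2 := by
    field_simp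
    linear_combination (-(1:ℝ)) * hq
  have hsqrt : Real.sqrt (p - p^2) = (1 - (2*m-1)*p)/(2*m-1) := by
    rw [hval, Real.sqrt_sq hq0]
  have hden : 0 < 2 * ((1 - (2*m-1)*p)/(2*m-1) + 2 * p^2) := by positivity
  rw [mStar, hsqrt]
  rw [div_eq_iff hden.ne']
  field_simp
  ring_nf
  nlinarith [hq]
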